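/- Boosting of the quantile level: suppose Θ is a non-empty Polish space, g is continuous, and there exists A > 0 such that L(θ₁,θ₂) ≤ A{L(θ₁,θ₃) + L(θ₂,θ₃)} for all θ₁,θ₂,θ₃ ∈ Θ. Define h : [0,1] → [0,1] by h(x) := x³ + 3x²(1−x), let h^{∘m} denote its m-fold composition, and fix δ_− ∈ (0,1/2) and δ_+ ∈ (δ_−,1/2). Then there exists k ∈ ℕ such that h^{∘k}(δ_+) ≤ δ_−; moreover, for any such k and every δ ∈ (0,δ_+], one has M_−(δ, 𝒫_Θ, L) ≥ (2A)^{−k} · M_−(δ_−, 𝒫_Θ^{⊗3^k}, L). -/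

import Mathlib

open MeasureTheory ENNReal

/-- The lower minimax `(1-δ)`th quantile. -/
noncomputable def lowerMinimaxQuantile {Θ 𝒳 : Type*} [MeasurableSpace Θ] [MeasurableSpace 𝒳]
    (Pfam : Θ → Set (Measure 𝒳)) (L : Θ → Θ → ℝ) (δ : ℝ) : ℝ≥0∞ :=
  sInf {r : ℝ≥0∞ |
    (⨅ T : {f : 𝒳 → Θ // Measurable f}, ⨆ θ : Θ, ⨆ P ∈ Pfam θ,
      P {x | r < ENNReal.ofReal (L (T.1 x) θ)}) ≤ ENNReal.ofReal δ}

/-- The family of `m`-fold product measures `P^{⊗m}` for `P ∈ Pfam θ`. -/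
noncomputable def prodFamily {Θ 𝒳 : Type*} [MeasurableSpace 𝒳]
    (Pfam : Θ → Set (Measure 𝒳)) (m : ℕ) : Θ → Set (Measure (Fin m → 𝒳)) :=
  fun θ => (fun P => Measure.pi fun _ : Fin m => P) '' Pfam θ

private lemma hfun_nonneg {x : ℝ} (hx : 0 ≤ x) (hx1 : x ≤ 1) :
    0 ≤ x ^ 3 + 3 * x ^ 2 * (1 - x) := by nlinarith [sq_nonneg x]

private lemma hfun_le_one {x : ℝ} (hx : 0 ≤ x) (hx1 : x ≤ 1) :
    x ^ 3 + 3 * x ^ 2 * (1 - x) ≤ 1 := by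
  nlinarith [mul_nonneg (sq_nonneg (1 - x)) (show (0:ℝ) ≤ 1 + 2 * x by linarith)]

private lemma hfun_mono {x y : ℝ} (hx : 0 ≤ x) (hxy : x ≤ y) (hy : y ≤ 1) :
    x ^ 3 + 3 * x ^ 2 * (1 - x) ≤ y ^ 3 + 3 * y ^ 2 * (1 - y) := by
  nlinarith [mul_nonneg (mul_nonneg (sub_nonneg.2 hxy) hx) (sub_nonneg.2 (hxy.trans hy)),
    mul_nonneg (mul_nonneg (sub_nonneg.2 hxy) (hx.trans hxy)) (sub_nonneg.2 hy),
    mul_nonneg (mul_nonneg (sub_nonneg.2 hxy) hx) (sub_nonneg.2 hy),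
    mul_nonneg (mul_nonneg (sub_nonneg.2 hxy) (hx.trans hxy)) (sub_nonneg.2 (hxy.trans hy))]

private lemma hfun_iter_bounds (k : ℕ) {x : ℝ} (hx : 0 ≤ x) (hx1 : x ≤ 1) :
    0 ≤ (fun x : ℝ => x ^ 3 + 3 * x ^ 2 * (1 - x))^[k] x ∧
      (fun x : ℝ => x ^ 3 + 3 * x ^ 2 * (1 - x))^[k] x ≤ 1 := by
  induction k generalizing x with
  | zero => exact ⟨hx, hx1⟩
  | succ n ih =>
    rw [Function.iterate_succ_apply]
    exact ih (hfun_nonneg hx hx1) (hfun_le_one hx hx1)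

private lemma hfun_iter_mono (k : ℕ) {x y : ℝ} (hx : 0 ≤ x) (hxy : x ≤ y) (hy : y ≤ 1) :
    (fun x : ℝ => x ^ 3 + 3 * x ^ 2 * (1 - x))^[k] x ≤
      (fun x : ℝ => x ^ 3 + 3 * x ^ 2 * (1 - x))^[k] y := by
  induction k generalizing x y with
  | zero => exact hxy
  | succ n ih =>
    rw [Function.iterate_succ_apply, Function.iterate_succ_apply]
    exact ih (hfun_nonneg hx (hxy.trans hy)) (hfun_mono hx hxy hy) (hfun_le_one (hx.trans hxy) hy)

private lemma hfun_continuous : Continuous (fun x : ℝ => x ^ 3 + 3 * x ^ 2 * (1 - x)) := by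
  continuity

private lemma exists_k {δm δp : ℝ} (hδm : δm ∈ Set.Ioo (0 : ℝ) (1/2)) (hδp : δp ∈ Set.Ioo δm (1/2)) :
    ∃ k : ℕ, (fun x : ℝ => x ^ 3 + 3 * x ^ 2 * (1 - x))^[k] δp ≤ δm := by
  obtain ⟨hδm0, hδm2⟩ := hδm
  obtain ⟨hδpm, hδp2⟩ := hδp
  have hδp0 : 0 < δp := hδm0.trans hδpm
  set c : ℝ := δp * (3 - 2 * δp) with hc
  have hc0 : 0 ≤ c := by nlinarith
  have hc1 : c < 1 := by nlinarith
  have key : ∀ x : ℝ, 0 ≤ x → x ≤ δp →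
      (0 ≤ x ^ 3 + 3 * x ^ 2 * (1 - x) ∧ x ^ 3 + 3 * x ^ 2 * (1 - x) ≤ c * x) := by
    intro x hx hxp
    constructor
    · nlinarith [sq_nonneg x]
    · nlinarith [mul_nonneg (mul_nonneg hx (sub_nonneg.2 hxp))
        (show (0:ℝ) ≤ 3 - 2 * δp - 2 * x by nlinarith)]
  have iter : ∀ j : ℕ, 0 ≤ (fun x : ℝ => x ^ 3 + 3 * x ^ 2 * (1 - x))^[j] δp ∧
      (fun x : ℝ => x ^ 3 + 3 * x ^ 2 * (1 - x))^[j] δp ≤ c ^ j * δp := by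
    intro j
    induction j with
    | zero => exact ⟨hδp0.le, by simp⟩
    | succ n ih =>
      obtain ⟨ih0, ih1⟩ := ih
      have hle : (fun x : ℝ => x ^ 3 + 3 * x ^ 2 * (1 - x))^[n] δp ≤ δp := by
        refine ih1.trans ?_
        have : c ^ n ≤ 1 := pow_le_one₀ hc0 hc1.le
        nlinarith
      rw [Function.iterate_succ_apply']
      obtain ⟨k0, k1⟩ := key _ ih0 hle
      refine ⟨k0, k1.trans ?_⟩
      calc c * (fun x : ℝ => x ^ 3 + 3 * x ^ 2 * (1 - x))^[n] δp ≤ c * (c ^ n * δp) :=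
            mul_le_mul_of_nonneg_left ih1 hc0
        _ = c ^ (n + 1) * δp := by ring
  obtain ⟨k, hk⟩ := exists_pow_lt_of_lt_one (show (0:ℝ) < δm / δp by positivity) hc1
  refine ⟨k, (iter k).2.trans ?_⟩
  exact ((lt_div_iff₀ hδp0).mp hk).le

private lemma exists_split (𝒳 : Type*) [MeasurableSpace 𝒳] (m n : ℕ) (hnm : n = 3 * m) :
    ∃ φ : (Fin n → 𝒳) → (Fin 3 → Fin m → 𝒳), Measurable φ ∧
      ∀ (P : Measure 𝒳) [IsProbabilityMeasure P],
        MeasurePreserving φ (Measure.pi fun _ : Fin n => P)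
          (Measure.pi fun _ : Fin 3 => Measure.pi fun _ : Fin m => P) := by
  subst hnm
  let e0 : (Fin m ⊕ (Fin m ⊕ Fin m)) ≃ Fin (3 * m) :=
    ((Equiv.sumCongr (Equiv.refl (Fin m)) finSumFinEquiv).trans finSumFinEquiv).trans
      (finCongr (by ring))
  let E1 : ((Fin m ⊕ (Fin m ⊕ Fin m)) → 𝒳) ≃ᵐ (Fin (3 * m) → 𝒳) :=
    MeasurableEquiv.piCongrLeft (fun _ => 𝒳) e0
  let E2 : ((Fin m ⊕ (Fin m ⊕ Fin m)) → 𝒳) ≃ᵐ ((Fin m → 𝒳) × ((Fin m ⊕ Fin m) → 𝒳)) :=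
    MeasurableEquiv.sumPiEquivProdPi _
  let E3 : ((Fin m ⊕ Fin m) → 𝒳) ≃ᵐ ((Fin m → 𝒳) × (Fin m → 𝒳)) :=
    MeasurableEquiv.sumPiEquivProdPi _
  let E4 : (Fin 3 → (Fin m → 𝒳)) ≃ᵐ ((Fin m → 𝒳) × (Fin 2 → (Fin m → 𝒳))) :=
    MeasurableEquiv.piFinSuccAbove (fun _ => (Fin m → 𝒳)) 0
  let E5 : (Fin 2 → (Fin m → 𝒳)) ≃ᵐ ((Fin m → 𝒳) × (Fin m → 𝒳)) :=
    MeasurableEquiv.finTwoArrow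
  refine ⟨(E4.symm : _ → _) ∘ (Prod.map id (E5.symm : _ → _)) ∘ (Prod.map id (E3 : _ → _)) ∘
      (E2 : _ → _) ∘ (E1.symm : _ → _), ?_, ?_⟩
  · exact E4.symm.measurable.comp ((measurable_id.prodMap E5.symm.measurable).comp
      ((measurable_id.prodMap E3.measurable).comp (E2.measurable.comp E1.symm.measurable)))
  · intro P hP
    have h1 : MeasurePreserving (E1.symm : _ → _) (Measure.pi fun _ : Fin (3 * m) => P)
        (Measure.pi fun _ : Fin m ⊕ (Fin m ⊕ Fin m) => P) :=
      (measurePreserving_piCongrLeft (fun _ => P) e0).symm E1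
    have h2 := measurePreserving_sumPiEquivProdPi (fun _ : Fin m ⊕ (Fin m ⊕ Fin m) => P)
    have h3 := (MeasurePreserving.id (Measure.pi fun _ : Fin m => P)).prod
      (measurePreserving_sumPiEquivProdPi (fun _ : Fin m ⊕ Fin m => P))
    have h5 := (MeasurePreserving.id (Measure.pi fun _ : Fin m => P)).prod
      ((measurePreserving_finTwoArrow (Measure.pi fun _ : Fin m => P)).symm E5)
    have h4 : MeasurePreserving (E4.symm : _ → _)
        ((Measure.pi fun _ : Fin m => P).prod (Measure.pi fun _ : Fin 2 => Measure.pi fun _ : Fin m => P))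
        (Measure.pi fun _ : Fin 3 => Measure.pi fun _ : Fin m => P) :=
      (measurePreserving_piFinSuccAbove (fun _ : Fin 3 => Measure.pi fun _ : Fin m => P) 0).symm E4
    exact h4.comp (h5.comp (h3.comp (h2.comp h1)))

private lemma fin3_pigeon {i j i' j' : Fin 3} (hij : i ≠ j) (hij' : i' ≠ j') :
    i = i' ∨ i = j' ∨ j = i' ∨ j = j' := by
  have b1 := i.isLt; have b2 := j.isLt; have b3 := i'.isLt; have b4 := j'.isLt
  have v1 : (i : ℕ) ≠ (j : ℕ) := fun h => hij (Fin.ext h)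
  have v2 : (i' : ℕ) ≠ (j' : ℕ) := fun h => hij' (Fin.ext h)
  have : (i : ℕ) = i' ∨ (i : ℕ) = j' ∨ (j : ℕ) = i' ∨ (j : ℕ) = j' := by omega
  rcases this with h | h | h | h
  · exact Or.inl (Fin.ext h)
  · exact Or.inr (Or.inl (Fin.ext h))
  · exact Or.inr (Or.inr (Or.inl (Fin.ext h)))
  · exact Or.inr (Or.inr (Or.inr (Fin.ext h)))

private lemma step_lemma {Θ : Type*} [PseudoMetricSpace Θ] [Nonempty Θ] [PolishSpace Θ]
    [MeasurableSpace Θ] [BorelSpace Θ]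
    (g : ℝ → ℝ) (hg : MonotoneOn g (Set.Ici 0)) (hgcont : Continuous g)
    (A : ℝ) (hA : 0 < A)
    (hquasi : ∀ θ₁ θ₂ θ₃ : Θ, g (dist θ₁ θ₂) ≤ A * (g (dist θ₁ θ₃) + g (dist θ₂ θ₃)))
    {Z : Type*} [MeasurableSpace Z] (Q : Θ → Set (Measure Z))
    (hQ : ∀ θ, ∀ P ∈ Q θ, IsProbabilityMeasure P)
    (t q : ℝ) (hq0 : 0 ≤ q) (hq1 : q ≤ 1)
    (T : Z → Θ) (hT : Measurable T)
    (hb : ∀ θ, ∀ P ∈ Q θ, P {z | t < g (dist (T z) θ)} ≤ ENNReal.ofReal q)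
    (η : ℝ) (hη : 0 < η) :
    ∃ T' : (Fin 3 → Z) → Θ, Measurable T' ∧ ∀ θ, ∀ P ∈ Q θ,
      (Measure.pi fun _ : Fin 3 => P) {z | 2 * A * t + η < g (dist (T' z) θ)}
        ≤ ENNReal.ofReal (q ^ 3 + 3 * q ^ 2 * (1 - q)) := by
  classical
  set u : ℕ → Θ := TopologicalSpace.denseSeq Θ with hu_def
  have hu : DenseRange u := TopologicalSpace.denseRange_denseSeq Θ
  set t' : ℝ := t + η / A with ht'
  have htt' : t < t' := by
    have h : 0 < η / A := div_pos hη hA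
    rw [ht']
    linarith
  -- the "good" sets
  set G : ℕ → Set (Fin 3 → Z) := fun n =>
    {z | ∃ i j : Fin 3, i ≠ j ∧ g (dist (u n) (T (z i))) ≤ t' ∧ g (dist (u n) (T (z j))) ≤ t'}
    with hG_def
  have hGmeas : ∀ n, MeasurableSet (G n) := by
    intro n
    have hmi : ∀ i : Fin 3, Measurable fun z : Fin 3 → Z => g (dist (u n) (T (z i))) := fun i =>
      hgcont.measurable.comp ((measurable_const.dist (hT.comp (measurable_pi_apply i))))
    have : G n = ⋃ i, ⋃ j, ⋃ (_ : i ≠ j),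
        ({z : Fin 3 → Z | g (dist (u n) (T (z i))) ≤ t'} ∩
          {z : Fin 3 → Z | g (dist (u n) (T (z j))) ≤ t'}) := by
      ext z
      simp only [hG_def, Set.mem_setOf_eq, Set.mem_iUnion, Set.mem_inter_iff]
      tauto
    rw [this]
    exact MeasurableSet.iUnion fun i => MeasurableSet.iUnion fun j =>
      MeasurableSet.iUnion fun _ =>
        ((measurableSet_le (hmi i) measurable_const).inter
          (measurableSet_le (hmi j) measurable_const))
  set φ : (Fin 3 → Z) → ℕ := fun z => sInf {n | z ∈ G n} with hφ_def
  have hφ : Measurable φ := by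
    apply measurable_to_countable'
    intro n
    match n with
    | 0 =>
      have : φ ⁻¹' {0} = G 0 ∪ ⋂ m, (G m)ᶜ := by
        ext z
        simp only [Set.mem_preimage, Set.mem_singleton_iff, hφ_def, Set.mem_union,
          Set.mem_iInter, Set.mem_compl_iff]
        rw [Nat.sInf_eq_zero]
        constructor
        · rintro (h | h)
          · exact Or.inl h
          · exact Or.inr fun m hm => by
              have : m ∈ ({n | z ∈ G n} : Set ℕ) := hm
              rw [h] at this
              exact this
        · rintro (h | h)
          · exact Or.inl h
          · exact Or.inr (Set.eq_empty_iff_forall_notMem.2 h)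
      rw [this]
      exact (hGmeas 0).union (MeasurableSet.iInter fun m => (hGmeas m).compl)
    | (n + 1) =>
      have : φ ⁻¹' {n + 1} = G (n + 1) ∩ ⋂ m, ⋂ (_ : m ≤ n), (G m)ᶜ := by
        ext z
        simp only [Set.mem_preimage, Set.mem_singleton_iff, hφ_def, Set.mem_inter_iff,
          Set.mem_iInter, Set.mem_compl_iff]
        constructor
        · intro h
          have hne : {n | z ∈ G n}.Nonempty := by
            by_contra h'
            rw [Set.not_nonempty_iff_eq_empty] at h'
            rw [h', Nat.sInf_empty] at h
            omega
          constructor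
          · have := Nat.sInf_mem hne
            rwa [h] at this
          · intro m hm
            exact Nat.notMem_of_lt_sInf (by omega : m < sInf {n | z ∈ G n})
        · rintro ⟨h1, h2⟩
          refine le_antisymm (Nat.sInf_le h1) ?_
          refine le_csInf ⟨_, h1⟩ fun b hb => ?_
          by_contra hb'
          push_neg at hb'
          exact h2 b (by omega) hb
      rw [this]
      exact (hGmeas (n + 1)).inter
        (MeasurableSet.iInter fun m => MeasurableSet.iInter fun _ => (hGmeas m).compl)
  refine ⟨fun z => u (φ z), measurable_from_nat.comp hφ, ?_⟩
  intro θ P hP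
  haveI := hQ θ P hP
  set E : Set Z := {z₀ | t < g (dist (T z₀) θ)} with hE_def
  have hE : MeasurableSet E :=
    measurableSet_lt measurable_const (hgcont.measurable.comp (hT.dist measurable_const))
  -- key estimate: two good coordinates force a good aggregate
  have key : ∀ (z : Fin 3 → Z) (i j : Fin 3), i ≠ j → z i ∉ E → z j ∉ E →
      g (dist (u (φ z)) θ) ≤ 2 * A * t + η := by
    intro z i j hij hiE hjE
    have hgi : g (dist (T (z i)) θ) ≤ t := not_lt.mp hiE
    have hgj : g (dist (T (z j)) θ) ≤ t := not_lt.mp hjE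
    set O : Set Θ := {w | g (dist w (T (z i))) < t' ∧ g (dist w (T (z j))) < t'} with hO_def
    have hOopen : IsOpen O := by
      have h1 : IsOpen {w : Θ | g (dist w (T (z i))) < t'} :=
        isOpen_Iio.preimage (hgcont.comp (continuous_id.dist continuous_const))
      have h2 : IsOpen {w : Θ | g (dist w (T (z j))) < t'} :=
        isOpen_Iio.preimage (hgcont.comp (continuous_id.dist continuous_const))
      exact h1.inter h2
    have hθO : θ ∈ O := by
      constructor
      · rw [dist_comm]; exact lt_of_le_of_lt hgi htt'
      · rw [dist_comm]; exact lt_of_le_of_lt hgj htt'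
    obtain ⟨n, hn⟩ := hu.exists_mem_open hOopen ⟨θ, hθO⟩
    have hne : {n | z ∈ G n}.Nonempty := ⟨n, i, j, hij, hn.1.le, hn.2.le⟩
    have hgood : z ∈ G (φ z) := Nat.sInf_mem hne
    obtain ⟨i', j', hij', h1, h2⟩ := hgood
    have hcommon : ∃ l : Fin 3, g (dist (u (φ z)) (T (z l))) ≤ t' ∧ g (dist (T (z l)) θ) ≤ t := by
      rcases fin3_pigeon hij' hij with h | h | h | h
      · exact ⟨i', h1, by rw [h]; exact hgi⟩
      · exact ⟨i', h1, by rw [h]; exact hgj⟩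
      · exact ⟨j', h2, by rw [h]; exact hgi⟩
      · exact ⟨j', h2, by rw [h]; exact hgj⟩
    obtain ⟨l, hl1, hl2⟩ := hcommon
    have hq := hquasi (u (φ z)) θ (T (z l))
    have hθl : g (dist θ (T (z l))) ≤ t := by rw [dist_comm]; exact hl2
    calc g (dist (u (φ z)) θ) ≤ A * (g (dist (u (φ z)) (T (z l))) + g (dist θ (T (z l)))) := hq
      _ ≤ A * (t' + t) := by
          apply mul_le_mul_of_nonneg_left (add_le_add hl1 hθl) hA.le
      _ = 2 * A * t + η := by
          rw [ht']
          field_simp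
          ring
  -- pattern sets
  set s1 : Fin 3 → Set Z := ![Set.univ, E, E] with hs1
  set s2 : Fin 3 → Set Z := ![E, E, Eᶜ] with hs2
  set s3 : Fin 3 → Set Z := ![E, Eᶜ, E] with hs3
  have hsub : {z : Fin 3 → Z | 2 * A * t + η < g (dist (u (φ z)) θ)} ⊆
      Set.pi Set.univ s1 ∪ Set.pi Set.univ s2 ∪ Set.pi Set.univ s3 := by
    intro z hz
    simp only [Set.mem_setOf_eq] at hz
    by_cases h0 : z 0 ∈ E <;> by_cases h1 : z 1 ∈ E <;> by_cases h2 : z 2 ∈ E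
    · refine Or.inl (Or.inl fun i _ => ?_)
      fin_cases i <;> simp [hs1, h1, h2]
    · refine Or.inl (Or.inr fun i _ => ?_)
      fin_cases i <;> simp [hs2, h0, h1, h2]
    · refine Or.inr fun i _ => ?_
      fin_cases i <;> simp [hs3, h0, h1, h2]
    · exact absurd hz (not_lt.2 (key z 1 2 (by decide) h1 h2))
    · refine Or.inl (Or.inl fun i _ => ?_)
      fin_cases i <;> simp [hs1, h1, h2]
    · exact absurd hz (not_lt.2 (key z 0 2 (by decide) h0 h2))
    · exact absurd hz (not_lt.2 (key z 0 1 (by decide) h0 h1))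
    · exact absurd hz (not_lt.2 (key z 0 1 (by decide) h0 h1))
  -- measure computation
  set μ : Measure (Fin 3 → Z) := Measure.pi fun _ : Fin 3 => P with hμ
  set x : ℝ := (P E).toReal with hx_def
  have hx0 : 0 ≤ x := ENNReal.toReal_nonneg
  have hxq : x ≤ q := ENNReal.toReal_le_of_le_ofReal hq0 (hb θ P hP)
  have hx1 : x ≤ 1 := by
    refine ENNReal.toReal_le_of_le_ofReal zero_le_one ?_
    rw [ENNReal.ofReal_one]
    exact prob_le_one
  have hPE : P E = ENNReal.ofReal x := (ENNReal.ofReal_toReal (measure_ne_top P E)).symm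
  have hPEc : P Eᶜ = ENNReal.ofReal (1 - x) := by
    rw [measure_compl hE (measure_ne_top _ _), measure_univ, hPE, ← ENNReal.ofReal_one,
      ← ENNReal.ofReal_sub _ hx0]
  have hμ1 : μ (Set.pi Set.univ s1) = ENNReal.ofReal (x * x) := by
    rw [hμ, Measure.pi_pi, Fin.prod_univ_three]
    simp only [hs1, Matrix.cons_val_zero, Matrix.cons_val_one, Matrix.head_cons,
      Matrix.cons_val_two, Matrix.tail_cons]
    rw [measure_univ, one_mul, hPE, ← ENNReal.ofReal_mul hx0]
  have hμ2 : μ (Set.pi Set.univ s2) = ENNReal.ofReal (x * x * (1 - x)) := by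
    rw [hμ, Measure.pi_pi, Fin.prod_univ_three]
    simp only [hs2, Matrix.cons_val_zero, Matrix.cons_val_one, Matrix.head_cons,
      Matrix.cons_val_two, Matrix.tail_cons]
    rw [hPE, hPEc, ← ENNReal.ofReal_mul hx0, ← ENNReal.ofReal_mul (mul_nonneg hx0 hx0)]
  have hμ3 : μ (Set.pi Set.univ s3) = ENNReal.ofReal (x * (1 - x) * x) := by
    rw [hμ, Measure.pi_pi, Fin.prod_univ_three]
    simp only [hs3, Matrix.cons_val_zero, Matrix.cons_val_one, Matrix.head_cons,
      Matrix.cons_val_two, Matrix.tail_cons]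
    rw [hPE, hPEc, ← ENNReal.ofReal_mul hx0, ← ENNReal.ofReal_mul (mul_nonneg hx0 (by linarith))]
  have harith : x * x + x * x * (1 - x) + x * (1 - x) * x ≤ q ^ 3 + 3 * q ^ 2 * (1 - q) := by
    nlinarith [mul_nonneg (mul_nonneg (sub_nonneg.2 hxq) hx0) (sub_nonneg.2 (hxq.trans hq1)),
      mul_nonneg (mul_nonneg (sub_nonneg.2 hxq) (hx0.trans hxq)) (sub_nonneg.2 hq1),
      mul_nonneg (mul_nonneg (sub_nonneg.2 hxq) hx0) (sub_nonneg.2 hq1),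
      mul_nonneg (mul_nonneg (sub_nonneg.2 hxq) (hx0.trans hxq)) (sub_nonneg.2 (hxq.trans hq1))]
  calc μ {z | 2 * A * t + η < g (dist (u (φ z)) θ)}
      ≤ μ (Set.pi Set.univ s1 ∪ Set.pi Set.univ s2 ∪ Set.pi Set.univ s3) := measure_mono hsub
    _ ≤ μ (Set.pi Set.univ s1) + μ (Set.pi Set.univ s2) + μ (Set.pi Set.univ s3) :=
        le_trans (measure_union_le _ _) (add_le_add_left (measure_union_le _ _) _)
    _ = ENNReal.ofReal (x * x) + ENNReal.ofReal (x * x * (1 - x)) +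
          ENNReal.ofReal (x * (1 - x) * x) := by rw [hμ1, hμ2, hμ3]
    _ = ENNReal.ofReal (x * x + x * x * (1 - x) + x * (1 - x) * x) := by
        rw [← ENNReal.ofReal_add (mul_nonneg hx0 hx0) (by nlinarith),
          ← ENNReal.ofReal_add (by nlinarith) (by nlinarith)]
    _ ≤ ENNReal.ofReal (q ^ 3 + 3 * q ^ 2 * (1 - q)) := ENNReal.ofReal_le_ofReal harith
private lemma boost_iter {Θ 𝒳 : Type*} [PseudoMetricSpace Θ] [Nonempty Θ] [PolishSpace Θ]
    [MeasurableSpace Θ] [BorelSpace Θ] [MeasurableSpace 𝒳]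
    (Pfam : Θ → Set (Measure 𝒳)) (hPfam : ∀ θ, ∀ P ∈ Pfam θ, IsProbabilityMeasure P)
    (g : ℝ → ℝ) (hg : MonotoneOn g (Set.Ici 0)) (hgcont : Continuous g)
    (A : ℝ) (hA : 0 < A)
    (hquasi : ∀ θ₁ θ₂ θ₃ : Θ, g (dist θ₁ θ₂) ≤ A * (g (dist θ₁ θ₃) + g (dist θ₂ θ₃)))
    (k : ℕ) (t q : ℝ) (hq0 : 0 ≤ q) (hq1 : q ≤ 1)
    (T : 𝒳 → Θ) (hT : Measurable T)
    (hb : ∀ θ, ∀ P ∈ Pfam θ, P {x | t < g (dist (T x) θ)} ≤ ENNReal.ofReal q)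
    (η : ℝ) (hη : 0 < η) :
    ∃ T' : (Fin (3 ^ k) → 𝒳) → Θ, Measurable T' ∧ ∀ θ, ∀ P ∈ Pfam θ,
      (Measure.pi fun _ : Fin (3 ^ k) => P) {x | (2 * A) ^ k * t + η < g (dist (T' x) θ)}
        ≤ ENNReal.ofReal ((fun x : ℝ => x ^ 3 + 3 * x ^ 2 * (1 - x))^[k] q) := by
  induction k generalizing η with
  | zero =>
    refine ⟨fun x => T (x ⟨0, by positivity⟩), hT.comp (measurable_pi_apply _), ?_⟩
    intro θ P hP
    haveI := hPfam θ P hP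
    calc (Measure.pi fun _ : Fin (3 ^ 0) => P)
          {x | (2 * A) ^ 0 * t + η < g (dist (T (x ⟨0, by positivity⟩)) θ)}
        ≤ (Measure.pi fun _ : Fin (3 ^ 0) => P)
            (Set.pi Set.univ fun _ : Fin (3 ^ 0) => {z : 𝒳 | t < g (dist (T z) θ)}) := by
          refine measure_mono fun x hx => ?_
          simp only [Set.mem_setOf_eq, pow_zero, one_mul] at hx
          intro i _
          have hi : i = ⟨0, by positivity⟩ := by
            have h1 : (3 : ℕ) ^ 0 = 1 := pow_zero 3
            have := i.isLt
            exact Fin.ext (by omega)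
          subst hi
          show t < g (dist (T (x _)) θ)
          linarith
      _ = ∏ _i : Fin (3 ^ 0), P {z : 𝒳 | t < g (dist (T z) θ)} := Measure.pi_pi _ _
      _ = P {z : 𝒳 | t < g (dist (T z) θ)} := by
          rw [Finset.prod_const, Finset.card_univ, Fintype.card_fin, pow_zero, pow_one]
      _ ≤ ENNReal.ofReal q := hb θ P hP
      _ = ENNReal.ofReal ((fun x : ℝ => x ^ 3 + 3 * x ^ 2 * (1 - x))^[0] q) := by
          rw [Function.iterate_zero_apply]
  | succ j ih =>
    obtain ⟨Tj, hTj, hbj⟩ := ih (η / (2 * (2 * A))) (by positivity)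
    obtain ⟨hqj0, hqj1⟩ := hfun_iter_bounds j hq0 hq1
    obtain ⟨T₃, hT₃, hb₃⟩ := step_lemma g hg hgcont A hA hquasi (prodFamily Pfam (3 ^ j))
      (fun θ P' hP' => by
        obtain ⟨P, hP, rfl⟩ := hP'
        haveI := hPfam θ P hP
        infer_instance)
      ((2 * A) ^ j * t + η / (2 * (2 * A)))
      ((fun x : ℝ => x ^ 3 + 3 * x ^ 2 * (1 - x))^[j] q) hqj0 hqj1 Tj hTj
      (fun θ P' hP' => by
        obtain ⟨P, hP, rfl⟩ := hP'
        exact hbj θ P hP)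
      (η / 2) (by positivity)
    obtain ⟨φm, hφm, hφP⟩ := exists_split 𝒳 (3 ^ j) (3 ^ (j + 1)) (by rw [pow_succ'])
    refine ⟨fun x => T₃ (φm x), hT₃.comp hφm, ?_⟩
    intro θ P hP
    haveI := hPfam θ P hP
    have hmp := hφP P
    have hS : MeasurableSet {z : Fin 3 → Fin (3 ^ j) → 𝒳 |
        2 * A * ((2 * A) ^ j * t + η / (2 * (2 * A))) + η / 2 < g (dist (T₃ z) θ)} :=
      measurableSet_lt measurable_const (hgcont.measurable.comp (hT₃.dist measurable_const))
    have hthr : 2 * A * ((2 * A) ^ j * t + η / (2 * (2 * A))) + η / 2 =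
        (2 * A) ^ (j + 1) * t + η := by
      field_simp
      ring
    have hseteq : {x : Fin (3 ^ (j + 1)) → 𝒳 | (2 * A) ^ (j + 1) * t + η <
        g (dist (T₃ (φm x)) θ)} = φm ⁻¹' {z : Fin 3 → Fin (3 ^ j) → 𝒳 |
        2 * A * ((2 * A) ^ j * t + η / (2 * (2 * A))) + η / 2 < g (dist (T₃ z) θ)} := by
      rw [hthr]
      rfl
    rw [hseteq, hmp.measure_preimage hS.nullMeasurableSet, Function.iterate_succ_apply']
    exact hb₃ θ _ ⟨P, hP, rfl⟩

/-- boosting of the quantile level. -/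
theorem lowerMinimaxQuantile_boost
    {Θ 𝒳 : Type*} [PseudoMetricSpace Θ] [Nonempty Θ] [PolishSpace Θ]
    [MeasurableSpace Θ] [BorelSpace Θ] [MeasurableSpace 𝒳]
    (Pfam : Θ → Set (Measure 𝒳)) (hPfam : ∀ θ, ∀ P ∈ Pfam θ, IsProbabilityMeasure P)
    (g : ℝ → ℝ) (hg : MonotoneOn g (Set.Ici 0)) (hg0 : ∀ x ∈ Set.Ici (0 : ℝ), 0 ≤ g x)
    (hgcont : Continuous g)
    (A : ℝ) (hA : 0 < A)
    (hquasi : ∀ θ₁ θ₂ θ₃ : Θ,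
      g (dist θ₁ θ₂) ≤ A * (g (dist θ₁ θ₃) + g (dist θ₂ θ₃)))
    (δm δp : ℝ) (hδm : δm ∈ Set.Ioo (0 : ℝ) (1/2)) (hδp : δp ∈ Set.Ioo δm (1/2)) :
    (∃ k : ℕ, (fun x : ℝ => x ^ 3 + 3 * x ^ 2 * (1 - x))^[k] δp ≤ δm) ∧
      ∀ k : ℕ, (fun x : ℝ => x ^ 3 + 3 * x ^ 2 * (1 - x))^[k] δp ≤ δm →
        ∀ δ : ℝ, 0 < δ → δ ≤ δp →
          (ENNReal.ofReal ((2 * A) ^ k))⁻¹ *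
              lowerMinimaxQuantile (prodFamily Pfam (3 ^ k)) (fun a b => g (dist a b)) δm ≤
            lowerMinimaxQuantile Pfam (fun a b => g (dist a b)) δ := by
  obtain ⟨hδm0, hδm2⟩ := hδm
  obtain ⟨hδpm, hδp2⟩ := hδp
  refine ⟨exists_k ⟨hδm0, hδm2⟩ ⟨hδpm, hδp2⟩, ?_⟩
  intro k hk δ hδ0 hδδp
  have hδp1 : δp ≤ 1 := by linarith
  have hδ1 : δ ≤ 1 := by linarith
  set c : ℝ := (2 * A) ^ k with hc
  have hc0 : 0 < c := by positivity
  unfold lowerMinimaxQuantile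
  refine le_sInf fun r hr => ?_
  simp only [Set.mem_setOf_eq] at hr
  rcases eq_or_ne r ⊤ with rfl | hrtop
  · exact le_top
  set t : ℝ := r.toReal with ht_def
  have ht0 : 0 ≤ t := ENNReal.toReal_nonneg
  have hrt : r = ENNReal.ofReal t := (ENNReal.ofReal_toReal hrtop).symm
  have hmain : sInf {r' : ℝ≥0∞ |
      (⨅ T' : {f : (Fin (3 ^ k) → 𝒳) → Θ // Measurable f}, ⨆ θ : Θ,
        ⨆ P' ∈ prodFamily Pfam (3 ^ k) θ,
          P' {x | r' < ENNReal.ofReal (g (dist (T'.1 x) θ))}) ≤ ENNReal.ofReal δm}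
      ≤ ENNReal.ofReal (c * t) := by
    refine ENNReal.le_of_forall_pos_le_add fun ε hε _ => ?_
    have hεR : (0 : ℝ) < (ε : ℝ) := hε
    have hmem : (⨅ T' : {f : (Fin (3 ^ k) → 𝒳) → Θ // Measurable f}, ⨆ θ : Θ,
        ⨆ P' ∈ prodFamily Pfam (3 ^ k) θ,
          P' {x | ENNReal.ofReal (c * t + (ε : ℝ)) <
            ENNReal.ofReal (g (dist (T'.1 x) θ))}) ≤ ENNReal.ofReal δm := by
      refine ENNReal.le_of_forall_pos_le_add fun ε' hε' _ => ?_
      have hε'R : (0 : ℝ) < (ε' : ℝ) := hε'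
      set F : ℝ → ℝ := fun s =>
        (fun x : ℝ => x ^ 3 + 3 * x ^ 2 * (1 - x))^[k] (min (δ + s) 1) with hF
      have hFcont : ContinuousAt F 0 :=
        (((hfun_continuous.iterate k).comp
          (((continuous_const.add continuous_id).min continuous_const))).continuousAt)
      have hF0 : F 0 = (fun x : ℝ => x ^ 3 + 3 * x ^ 2 * (1 - x))^[k] δ := by
        rw [hF]
        simp only [add_zero, min_eq_left hδ1]
      have hlim : ∀ᶠ s in nhds (0 : ℝ), F s < F 0 + (ε' : ℝ) :=
        hFcont.eventually_lt_const (by linarith)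
      rw [Metric.eventually_nhds_iff] at hlim
      obtain ⟨Δ, hΔ, hball⟩ := hlim
      have hρ : F (Δ / 2) < F 0 + (ε' : ℝ) := by
        apply hball
        rw [Real.dist_eq, sub_zero, abs_of_pos (by linarith)]
        linarith
      set ρ : ℝ := Δ / 2 with hρ_def
      have hρ0 : 0 < ρ := by positivity
      have hlt : (⨅ T : {f : 𝒳 → Θ // Measurable f}, ⨆ θ : Θ, ⨆ P ∈ Pfam θ,
          P {x | r < ENNReal.ofReal (g (dist (T.1 x) θ))}) <
          ENNReal.ofReal δ + ENNReal.ofReal ρ :=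
        lt_of_le_of_lt hr (ENNReal.lt_add_right ENNReal.ofReal_ne_top
          (ENNReal.ofReal_pos.2 hρ0).ne')
      obtain ⟨T, hTsup⟩ := iInf_lt_iff.mp hlt
      set q : ℝ := min (δ + ρ) 1 with hq_def
      have hq0 : 0 ≤ q := le_min (by linarith) zero_le_one
      have hq1 : q ≤ 1 := min_le_right _ _
      have hbb : ∀ θ, ∀ P ∈ Pfam θ, P {x | t < g (dist (T.1 x) θ)} ≤ ENNReal.ofReal q := by
        intro θ P hP
        haveI := hPfam θ P hP
        have h1 : P {x | r < ENNReal.ofReal (g (dist (T.1 x) θ))} ≤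
            ENNReal.ofReal δ + ENNReal.ofReal ρ :=
          le_trans (le_trans (le_iSup₂ (f := fun (P : Measure 𝒳) (_ : P ∈ Pfam θ) =>
              P {x | r < ENNReal.ofReal (g (dist (T.1 x) θ))}) P hP)
            (le_iSup (fun θ : Θ => ⨆ P ∈ Pfam θ,
              P {x | r < ENNReal.ofReal (g (dist (T.1 x) θ))}) θ)) hTsup.le
        have hset : {x | r < ENNReal.ofReal (g (dist (T.1 x) θ))} =
            {x | t < g (dist (T.1 x) θ)} := by
          ext x
          simp only [Set.mem_setOf_eq, hrt]
          exact ENNReal.ofReal_lt_ofReal_iff_of_nonneg ht0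
        rw [hset] at h1
        rcases le_total (δ + ρ) 1 with hcase | hcase
        · rw [hq_def, min_eq_left hcase]
          exact h1.trans (le_of_eq (ENNReal.ofReal_add (by linarith) hρ0.le).symm)
        · rw [hq_def, min_eq_right hcase, ENNReal.ofReal_one]
          exact prob_le_one
      obtain ⟨T', hT'm, hT'b⟩ := boost_iter Pfam hPfam g hg hgcont A hA hquasi k t q hq0 hq1
        T.1 T.2 hbb (ε : ℝ) hεR
      refine le_trans (iInf_le _ ⟨T', hT'm⟩) ?_
      refine le_trans (iSup_le fun θ => iSup_le fun P' => iSup_le fun hP' => ?_) le_rfl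
      obtain ⟨P, hP, rfl⟩ := hP'
      haveI := hPfam θ P hP
      have hset2 : {x | ENNReal.ofReal (c * t + (ε : ℝ)) <
          ENNReal.ofReal (g (dist (T' x) θ))} = {x | c * t + (ε : ℝ) < g (dist (T' x) θ)} := by
        ext x
        simp only [Set.mem_setOf_eq]
        exact ENNReal.ofReal_lt_ofReal_iff_of_nonneg (by positivity)
      rw [hset2]
      refine (hT'b θ P hP).trans ?_
      have h7 : (fun x : ℝ => x ^ 3 + 3 * x ^ 2 * (1 - x))^[k] δ ≤ δm :=
        (hfun_iter_mono k hδ0.le hδδp hδp1).trans hk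
      have h5 : (fun x : ℝ => x ^ 3 + 3 * x ^ 2 * (1 - x))^[k] q ≤ δm + (ε' : ℝ) := by
        have h6 : F ρ = (fun x : ℝ => x ^ 3 + 3 * x ^ 2 * (1 - x))^[k] q := rfl
        rw [← h6]
        rw [hF0] at hρ
        linarith
      calc ENNReal.ofReal ((fun x : ℝ => x ^ 3 + 3 * x ^ 2 * (1 - x))^[k] q)
          ≤ ENNReal.ofReal (δm + (ε' : ℝ)) := ENNReal.ofReal_le_ofReal h5
        _ = ENNReal.ofReal δm + ENNReal.ofReal (ε' : ℝ) :=
            ENNReal.ofReal_add hδm0.le (by positivity)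
        _ = ENNReal.ofReal δm + (ε' : ℝ≥0∞) := by rw [ENNReal.ofReal_coe_nnreal]
    calc sInf {r' : ℝ≥0∞ |
        (⨅ T' : {f : (Fin (3 ^ k) → 𝒳) → Θ // Measurable f}, ⨆ θ : Θ,
          ⨆ P' ∈ prodFamily Pfam (3 ^ k) θ,
            P' {x | r' < ENNReal.ofReal (g (dist (T'.1 x) θ))}) ≤ ENNReal.ofReal δm}
        ≤ ENNReal.ofReal (c * t + (ε : ℝ)) := sInf_le hmem
      _ = ENNReal.ofReal (c * t) + ENNReal.ofReal (ε : ℝ) :=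
          ENNReal.ofReal_add (by positivity) (by positivity)
      _ = ENNReal.ofReal (c * t) + (ε : ℝ≥0∞) := by rw [ENNReal.ofReal_coe_nnreal]
  calc (ENNReal.ofReal c)⁻¹ * sInf {r' : ℝ≥0∞ |
      (⨅ T' : {f : (Fin (3 ^ k) → 𝒳) → Θ // Measurable f}, ⨆ θ : Θ,
        ⨆ P' ∈ prodFamily Pfam (3 ^ k) θ,
          P' {x | r' < ENNReal.ofReal (g (dist (T'.1 x) θ))}) ≤ ENNReal.ofReal δm}
      ≤ (ENNReal.ofReal c)⁻¹ * ENNReal.ofReal (c * t) := mul_le_mul_right hmain _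
    _ = (ENNReal.ofReal c)⁻¹ * (ENNReal.ofReal c * ENNReal.ofReal t) := by
        rw [ENNReal.ofReal_mul hc0.le]
    _ = ENNReal.ofReal t := by
        rw [← mul_assoc, ENNReal.inv_mul_cancel (ENNReal.ofReal_pos.2 hc0).ne'
          ENNReal.ofReal_ne_top, one_mul]
    _ = r := hrt.symm
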